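/- Let ρ < 0 and μ ≠ 0, and let t₊ < 0 < 1 < t₋ be the two solutions of μ² = ρt(1 − t), with x₊ = e^{t₊} < 1 < x₋ = e^{t₋}. The function g(x) := x²·(μ² + ρ(1 − log x)²) is strictly decreasing on (0, x₊], strictly increasing on [x₊, x₋], and strictly decreasing on [x₋, ∞); moreover g(x₊) = ρ·x₊²·(1 − t₊) < 0, g(x₋) = ρ·x₋²·log x₊ > 0, g(x) → 0 as x → 0⁺ and g(x) → −∞ as x → ∞. Consequently, for every d with 0 < d < ρ·x₋²·log x₊, the set {x > 0 : g(x) = d} has exactly two elements, one in (x₊, x₋) and one in (x₋, ∞), and for d > ρ·x₋²·log x₊ it is empty. -/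

import Mathlib

open Real


/-- `g(x) = F(x,0) = x²(μ² + ρ(1 − log x)²)`, where `F` is the first integral of the
phase-plane system associated to the curvature energy `Θ_μ` in the 2-space form of
curvature `ρ`. -/
noncomputable def gfun (μ ρ x : ℝ) : ℝ :=
  x ^ 2 * (μ ^ 2 + ρ * (1 - Real.log x) ^ 2)

lemma gfun_eq (μ ρ : ℝ) : gfun μ ρ = fun x => μ^2*x^2 + ρ*(x - x*Real.log x)^2 :=
  funext fun x => by unfold gfun; ring

lemma gfun_cont (μ ρ : ℝ) : Continuous (gfun μ ρ) := by
  rw [gfun_eq]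
  exact ((continuous_const.mul (continuous_pow 2)).add
    (continuous_const.mul ((continuous_id.sub continuous_mul_log).pow 2)))

lemma gfun_deriv (μ ρ x : ℝ) (hx : 0 < x) :
    HasDerivAt (gfun μ ρ)
      (2*x*(μ^2 + ρ*(1-Real.log x)^2) - 2*x*ρ*(1-Real.log x)) x := by
  have hL : HasDerivAt Real.log x⁻¹ x := Real.hasDerivAt_log hx.ne'
  have h1 : HasDerivAt (fun y => 1 - Real.log y) (-x⁻¹) x := by
    exact ((hasDerivAt_const x (1:ℝ)).sub hL).congr_deriv (by ring)
  have h2 : HasDerivAt (fun y => (1 - Real.log y)^2) (2*(1-Real.log x)*(-x⁻¹)) x := by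
    exact (h1.pow 2).congr_deriv (by norm_num)
  have h3 : HasDerivAt (fun y => μ^2 + ρ*(1-Real.log y)^2)
      (ρ*(2*(1-Real.log x)*(-x⁻¹))) x := (h2.const_mul ρ).const_add (μ^2)
  have h4 : HasDerivAt (fun y : ℝ => y^2) (2*x) x := by simpa using hasDerivAt_pow 2 x
  have h5 := h4.mul h3
  refine (h5 : HasDerivAt (gfun μ ρ) _ x).congr_deriv ?_
  field_simp
  ring


set_option maxHeartbeats 1000000 in
/-- For `ρ < 0` and `μ ≠ 0`, let `t₊ < 0 < 1 < t₋` be the two solutions of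
`μ² = ρt(1 − t)`, and `x₊ = e^{t₊} < 1 < x₋ = e^{t₋}`. Then
`g(x) = x²(μ² + ρ(1 − log x)²)` is strictly decreasing on `(0, x₊]`, strictly increasing
on `[x₊, x₋]`, strictly decreasing on `[x₋, ∞)`, with `g(x₊) = ρx₊²(1 − t₊) < 0`,
`g(x₋) = ρx₋² log x₊ > 0`, `g → 0` as `x → 0⁺` and `g → −∞` as `x → ∞`. Consequently,
for `0 < d < ρx₋² log x₊` the set `{x > 0 : g(x) = d}` has exactly two elements — one in
`(x₊, x₋)`, one in `(x₋, ∞)` — and for `d > ρx₋² log x₊` it is empty. -/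
theorem orbit_axis_cuts_hyperbolic (μ ρ : ℝ) (hρ : ρ < 0) (hμ : μ ≠ 0)
    (tp tm : ℝ) (htp : tp < 0) (htm : 1 < tm)
    (hsol : ∀ t : ℝ, μ ^ 2 = ρ * t * (1 - t) ↔ t = tp ∨ t = tm)
    (xp xm : ℝ) (hxp : xp = Real.exp tp) (hxm : xm = Real.exp tm) :
    StrictAntiOn (gfun μ ρ) (Set.Ioc 0 xp) ∧
    StrictMonoOn (gfun μ ρ) (Set.Icc xp xm) ∧
    StrictAntiOn (gfun μ ρ) (Set.Ici xm) ∧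
    (gfun μ ρ xp = ρ * xp ^ 2 * (1 - tp) ∧ gfun μ ρ xp < 0) ∧
    (gfun μ ρ xm = ρ * xm ^ 2 * Real.log xp ∧ 0 < gfun μ ρ xm) ∧
    Filter.Tendsto (gfun μ ρ) (nhdsWithin 0 (Set.Ioi 0)) (nhds 0) ∧
    Filter.Tendsto (gfun μ ρ) Filter.atTop Filter.atBot ∧
    (∀ d : ℝ, 0 < d → d < ρ * xm ^ 2 * Real.log xp →
      ∃ a b : ℝ, a ∈ Set.Ioo xp xm ∧ b ∈ Set.Ioi xm ∧
        ∀ x : ℝ, 0 < x → (gfun μ ρ x = d ↔ x = a ∨ x = b)) ∧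
    (∀ d : ℝ, ρ * xm ^ 2 * Real.log xp < d → ∀ x : ℝ, 0 < x → gfun μ ρ x ≠ d) := by
  have hxp0 : 0 < xp := hxp ▸ Real.exp_pos tp
  have hxm0 : 0 < xm := hxm ▸ Real.exp_pos tm
  have hlxp : Real.log xp = tp := by rw [hxp, Real.log_exp]
  have hlxm : Real.log xm = tm := by rw [hxm, Real.log_exp]
  have h1 : μ^2 = ρ*tp*(1-tp) := (hsol tp).mpr (Or.inl rfl)
  have h2 : μ^2 = ρ*tm*(1-tm) := (hsol tm).mpr (Or.inr rfl)
  have hρ0 : ρ ≠ 0 := ne_of_lt hρ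
  have hne : tp ≠ tm := by linarith
  have hsum : tp + tm = 1 := by
    have key : ρ * ((tp - tm) * (1 - tp - tm)) = 0 := by linear_combination h2 - h1
    have key2 : (tp - tm) * (1 - tp - tm) = 0 := by
      rcases mul_eq_zero.mp key with h | h
      · exact absurd h hρ0
      · exact h
    rcases mul_eq_zero.mp key2 with h | h
    · exact absurd (by linarith) hne
    · linarith
  have htm2 : tm = 1 - tp := by linarith
  have hxplt : xp < xm := by
    rw [hxp, hxm]; exact Real.exp_lt_exp.mpr (by linarith)
  -- derivative rewritten with the roots
  have hD : ∀ x : ℝ, 0 < x → HasDerivAt (gfun μ ρ)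
      (2*x*ρ*(Real.log x - tp)*(Real.log x - tm)) x := by
    intro x hx
    have h0 := gfun_deriv μ ρ x hx
    convert h0 using 1
    linear_combination (-2*x)*h1 - (2*x*ρ*(Real.log x - tp))*htm2
  have hderiv : ∀ x : ℝ, 0 < x →
      deriv (gfun μ ρ) x = 2*x*ρ*(Real.log x - tp)*(Real.log x - tm) := fun x hx =>
    (hD x hx).deriv
  have hcont := gfun_cont μ ρ
  -- monotonicity pieces
  have hanti1 : StrictAntiOn (gfun μ ρ) (Set.Ioc 0 xp) := by
    apply strictAntiOn_of_deriv_neg (convex_Ioc 0 xp) hcont.continuousOn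
    intro x hx
    rw [interior_Ioc] at hx
    have hx0 : 0 < x := hx.1
    have hlt : Real.log x < tp := by
      rw [← hlxp]; exact Real.log_lt_log hx0 hx.2
    rw [hderiv x hx0]
    have hp : 0 < (tp - Real.log x)*(tm - Real.log x) :=
      mul_pos (by linarith) (by linarith)
    nlinarith [mul_pos (mul_pos hx0 (neg_pos.mpr hρ)) hp]
  have hmono : StrictMonoOn (gfun μ ρ) (Set.Icc xp xm) := by
    apply strictMonoOn_of_deriv_pos (convex_Icc xp xm) hcont.continuousOn
    intro x hx
    rw [interior_Icc] at hx
    have hx0 : 0 < x := lt_trans hxp0 hx.1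
    have hl1 : tp < Real.log x := by rw [← hlxp]; exact Real.log_lt_log hxp0 hx.1
    have hl2 : Real.log x < tm := by rw [← hlxm]; exact Real.log_lt_log hx0 hx.2
    have hp : 0 < (Real.log x - tp)*(tm - Real.log x) :=
      mul_pos (by linarith) (by linarith)
    rw [hderiv x hx0]
    nlinarith [mul_pos (mul_pos hx0 (neg_pos.mpr hρ)) hp]
  have hanti2 : StrictAntiOn (gfun μ ρ) (Set.Ici xm) := by
    apply strictAntiOn_of_deriv_neg (convex_Ici xm) hcont.continuousOn
    intro x hx
    rw [interior_Ici] at hx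
    have hx0 : 0 < x := lt_trans hxm0 hx
    have hl2 : tm < Real.log x := by rw [← hlxm]; exact Real.log_lt_log hxm0 hx
    have hp : 0 < (Real.log x - tp)*(Real.log x - tm) :=
      mul_pos (by linarith) (by linarith)
    rw [hderiv x hx0]
    nlinarith [mul_pos (mul_pos hx0 (neg_pos.mpr hρ)) hp]
  -- values
  have hgxp : gfun μ ρ xp = ρ * xp ^ 2 * (1 - tp) := by
    unfold gfun; rw [hlxp]; linear_combination xp^2 * h1
  have hgxpneg : gfun μ ρ xp < 0 := by
    rw [hgxp]
    have : 0 < xp^2 * (1 - tp) := mul_pos (pow_pos hxp0 2) (by linarith)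
    nlinarith [this]
  have hgxm : gfun μ ρ xm = ρ * xm ^ 2 * Real.log xp := by
    unfold gfun; rw [hlxm, hlxp]
    linear_combination xm^2 * h2 - (ρ*xm^2)*htm2
  have hgxmpos : 0 < gfun μ ρ xm := by
    rw [hgxm, hlxp]
    have : 0 < (-ρ) * (xm^2 * (-tp)) :=
      mul_pos (by linarith) (mul_pos (pow_pos hxm0 2) (by linarith))
    nlinarith [this]
  -- limit at 0+
  have hlim0 : Filter.Tendsto (gfun μ ρ) (nhdsWithin 0 (Set.Ioi 0)) (nhds 0) := by
    have h0 : gfun μ ρ 0 = 0 := by unfold gfun; ring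
    have h0' := (hcont.tendsto 0)
    rw [h0] at h0'
    exact h0'.mono_left nhdsWithin_le_nhds
  -- limit at ∞
  have hlimtop : Filter.Tendsto (gfun μ ρ) Filter.atTop Filter.atBot := by
    have hKpos : (0:ℝ) ≤ (μ^2+1)/(-ρ) := div_nonneg (by positivity) (by linarith)
    set K := Real.sqrt ((μ^2+1)/(-ρ)) with hKdef
    have hK0 : 0 ≤ K := Real.sqrt_nonneg _
    have hKsq : K^2 = (μ^2+1)/(-ρ) := Real.sq_sqrt hKpos
    have hρK : ρ*K^2 = -(μ^2+1) := by
      rw [hKsq, mul_div_assoc', div_eq_iff (neg_ne_zero.mpr hρ0)]; ring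
    have hbound : ∀ x : ℝ, Real.exp (1+K) ≤ x → gfun μ ρ x ≤ -x^2 := by
      intro x hx
      have hx0 : 0 < x := lt_of_lt_of_le (Real.exp_pos _) hx
      have hlg : 1 + K ≤ Real.log x := by
        rw [← Real.log_exp (1+K)]; exact Real.log_le_log (Real.exp_pos _) hx
      have hsq : K^2 ≤ (Real.log x - 1)^2 := by nlinarith
      have hsq' : K^2 ≤ (1 - Real.log x)^2 := by nlinarith [hsq]
      have h5 : ρ*(1 - Real.log x)^2 ≤ ρ*K^2 :=
        mul_le_mul_of_nonpos_left hsq' (le_of_lt hρ)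
      have hineq : μ^2 + ρ*(1 - Real.log x)^2 ≤ -1 := by linarith
      have h6 := mul_le_mul_of_nonneg_left hineq (sq_nonneg x)
      unfold gfun
      nlinarith [h6]
    have hneg : Filter.Tendsto (fun x : ℝ => -x^2) Filter.atTop Filter.atBot :=
      Filter.tendsto_neg_atBot_iff.mpr (Filter.tendsto_pow_atTop (by norm_num))
    apply Filter.tendsto_atBot_mono' Filter.atTop _ hneg
    filter_upwards [Filter.eventually_ge_atTop (Real.exp (1+K))] with x hx
    exact hbound x hx
  -- negativity on (0, xp]
  have hnegleft : ∀ x : ℝ, 0 < x → x ≤ xp → gfun μ ρ x < 0 := by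
    intro x hx0 hxle
    have hl : Real.log x ≤ tp := by
      rw [← hlxp]; exact Real.log_le_log hx0 hxle
    unfold gfun
    have hq : (1-tp)^2 ≤ (1-Real.log x)^2 := by nlinarith
    have hq2 : ρ*(1-Real.log x)^2 ≤ ρ*(1-tp)^2 :=
      mul_le_mul_of_nonpos_left hq hρ.le
    have he : μ^2 + ρ*(1-tp)^2 = ρ*(1-tp) := by linear_combination h1
    have hend : ρ*(1-tp) < 0 := mul_neg_of_neg_of_pos hρ (by linarith)
    have hfac : μ^2 + ρ*(1 - Real.log x)^2 < 0 := by linarith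
    nlinarith [pow_pos hx0 2, hfac]
  -- max value
  have hmax : ∀ x : ℝ, 0 < x → gfun μ ρ x ≤ gfun μ ρ xm := by
    intro x hx0
    rcases le_or_gt x xp with h | h
    · linarith [hnegleft x hx0 h, hgxmpos]
    · rcases le_or_gt x xm with h' | h'
      · exact hmono.monotoneOn ⟨le_of_lt h, h'⟩ ⟨le_of_lt hxplt, le_refl xm⟩ h'
      · exact le_of_lt (hanti2 (le_refl xm) (le_of_lt h') h')
  refine ⟨hanti1, hmono, hanti2, ⟨hgxp, hgxpneg⟩, ⟨hgxm, hgxmpos⟩, hlim0, hlimtop, ?_, ?_⟩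
  · -- existence and uniqueness
    intro d hd0 hdlt
    rw [← hgxm] at hdlt
    have hIVT1 : d ∈ Set.Ioo (gfun μ ρ xp) (gfun μ ρ xm) := ⟨by linarith, hdlt⟩
    obtain ⟨a, ha, hga⟩ := intermediate_value_Ioo (le_of_lt hxplt) hcont.continuousOn hIVT1
    obtain ⟨N, hN1, hN2⟩ :=
      ((hlimtop.eventually (Filter.eventually_le_atBot (d-1))).and
        (Filter.eventually_ge_atTop (xm+1))).exists
    have hxmN : xm < N := by linarith
    obtain ⟨b, hb, hgb⟩ := intermediate_value_Ioo' (le_of_lt hxmN) hcont.continuousOn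
      (⟨by linarith, hdlt⟩ : d ∈ Set.Ioo (gfun μ ρ N) (gfun μ ρ xm))
    refine ⟨a, b, ha, hb.1, ?_⟩
    intro x hx0
    constructor
    · intro hgx
      rcases le_or_gt x xp with h | h
      · exact absurd hgx (by linarith [hnegleft x hx0 h])
      · rcases le_or_gt x xm with h' | h'
        · left
          exact hmono.injOn ⟨le_of_lt h, h'⟩ ⟨le_of_lt ha.1, le_of_lt ha.2⟩
            (hgx.trans hga.symm)
        · right
          exact hanti2.injOn (le_of_lt h') (le_of_lt hb.1) (hgx.trans hgb.symm)
    · rintro (rfl | rfl)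
      · exact hga
      · exact hgb
  · intro d hd x hx0
    rw [← hgxm] at hd
    exact ne_of_lt (lt_of_le_of_lt (hmax x hx0) hd)
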